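/- Let G=(V,E) be a finite simple graph and U ⊆ V. Define the graph G̃=(Ṽ,Ẽ) by Ṽ := {q,r,s,t} ∪ {w_v : v ∈ V} ∪ {x_v : v ∈ V} and Ẽ := {{w_v, x_u} : v,u ∈ V, u ∈ N_G[v]} ∪ {{x_v, q} : v ∈ V} ∪ {{q,r},{r,s},{s,t}}, and define f : Ṽ → {0,1,2} by f := 2·χ_{{s} ∪ {w_v : v ∈ U}} + χ_{{q,t}}. Then there exists a minimal dominating set D of G with U ⊆ D if and only if there exists a minimal maximal Roman dominating function g on G̃ with f ≤ g. -/

import Mathlib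

open Set

variable {V : Type*}

/-- The set of vertices on which `f` takes value `i`. -/
def Vlevel (f : V → ℕ) (i : ℕ) : Set V := {v | f v = i}

/-- Closed neighborhood of `v` inside the induced subgraph `G[W]`. -/
def closedNbhdIn (G : SimpleGraph V) (W : Set V) (v : V) : Set V :=
  {u ∈ W | u = v ∨ G.Adj u v}

/-- Closed neighborhood of a set `A` inside the induced subgraph `G[W]`. -/
def closedNbhdSetIn (G : SimpleGraph V) (W A : Set V) : Set V :=
  ⋃ u ∈ A, closedNbhdIn G W u

/-- Private neighborhood `P_{G[W],A}(v) = N[v] \ N[A \ {v}]` inside `G[W]`. -/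
def privNbhd (G : SimpleGraph V) (W A : Set V) (v : V) : Set V :=
  closedNbhdIn G W v \ closedNbhdSetIn G W (A \ {v})

/-- Closed neighborhood `N[v]` in `G`. -/
def closedNbhd (G : SimpleGraph V) (v : V) : Set V := {u | u = v ∨ G.Adj u v}

/-- Closed neighborhood `N[A]` of a set in `G`. -/
def closedNbhdSet (G : SimpleGraph V) (A : Set V) : Set V := ⋃ v ∈ A, closedNbhd G v

/-- Open neighborhood `N(A)` of a set in `G`. -/
def openNbhdSet (G : SimpleGraph V) (A : Set V) : Set V := ⋃ v ∈ A, G.neighborSet v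

/-- Characteristic function of a set. -/
noncomputable def chi (S : Set V) : V → ℕ := S.indicator 1

/-- Roman dominating function: values in {0,1,2}, and every vertex of value 0 has
a neighbor of value 2. -/
def IsRDF (G : SimpleGraph V) (f : V → ℕ) : Prop :=
  (∀ v, f v ≤ 2) ∧ ∀ v, f v = 0 → ∃ u, G.Adj v u ∧ f u = 2

/-- `f` is minimal with respect to the pointwise order among functions with property `P`. -/
def MinimalWrt (P : (V → ℕ) → Prop) (f : V → ℕ) : Prop :=
  P f ∧ ∀ g, P g → g ≤ f → g = f

/-- `C_{P,G}[A]`: minimal functions with property `P` whose set of vertices of value 2 is `A`. -/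
def CSet (P : (V → ℕ) → Prop) (A : Set V) : Set (V → ℕ) :=
  {f | MinimalWrt P f ∧ Vlevel f 2 = A}

/-- Nice Roman domination property. -/
def IsNiceRDP (G : SimpleGraph V) (P : (V → ℕ) → Prop) : Prop :=
  (∀ f, P f → IsRDF G f) ∧
  (∀ f, P f → ∀ v ∈ Vlevel f 0, P (f + chi {v})) ∧
  (∀ f, P f → ∀ v ∈ Vlevel f 2,
    (P (f - chi {v}) ↔ privNbhd G (Vlevel f 0 ∪ Vlevel f 2) (Vlevel f 2) v ⊆ {v}))

/-- Maximal Roman dominating function: an Rdf such that `V_0(f)` is not a dominating set. -/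
def IsMRDF (G : SimpleGraph V) (f : V → ℕ) : Prop :=
  IsRDF G f ∧ closedNbhdSet G (Vlevel f 0) ≠ Set.univ

/-- Total Roman dominating function: an Rdf such that `G[V_1(f) ∪ V_2(f)]` has no isolated
vertices. -/
def IsTRDF (G : SimpleGraph V) (f : V → ℕ) : Prop :=
  IsRDF G f ∧ ∀ v ∈ Vlevel f 1 ∪ Vlevel f 2, ∃ u ∈ Vlevel f 1 ∪ Vlevel f 2, G.Adj v u

/-- Connected Roman dominating function: an Rdf such that `G[V_1(f) ∪ V_2(f)]` is connected. -/
def IsCRDF (G : SimpleGraph V) (f : V → ℕ) : Prop :=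
  IsRDF G f ∧ (G.induce (Vlevel f 1 ∪ Vlevel f 2)).Connected

/-- Vertex set of the graph `G̃`: `Sum.inl 0 = q`, `Sum.inl 1 = r`, `Sum.inl 2 = s`,
`Sum.inl 3 = t`, `Sum.inr (Sum.inl v) = w_v`, `Sum.inr (Sum.inr v) = x_v`. -/
abbrev TildeVert (V : Type*) := (Fin 4) ⊕ (V ⊕ V)

/-- One direction of the edges of `G̃`: `w_v x_u` for `u ∈ N_G[v]`, `x_v q`,
`q r`, `r s`, `s t`. -/
def TildeRel (G : SimpleGraph V) : TildeVert V → TildeVert V → Prop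
  | Sum.inr (Sum.inl v), Sum.inr (Sum.inr u) => u = v ∨ G.Adj v u
  | Sum.inr (Sum.inr _), Sum.inl i => i = 0
  | Sum.inl i, Sum.inl j => (i = 0 ∧ j = 1) ∨ (i = 1 ∧ j = 2) ∨ (i = 2 ∧ j = 3)
  | _, _ => False

/-- The graph `G̃` built from `G`. -/
def TildeGraph (G : SimpleGraph V) : SimpleGraph (TildeVert V) where
  Adj x y := TildeRel G x y ∨ TildeRel G y x
  symm := ⟨fun _ _ h => Or.symm h⟩
  loopless := by
    constructor
    rintro (i | v | v) h
    · rcases h with h | h <;>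
        rcases h with ⟨h1, h2⟩ | ⟨h1, h2⟩ | ⟨h1, h2⟩ <;> subst h1 <;>
        exact absurd h2 (by decide)
    · rcases h with h | h <;> exact h
    · rcases h with h | h <;> exact h

/-- The presolution `f = 2·χ_{{s} ∪ {w_v : v ∈ U}} + χ_{{q,t}}` on `G̃`. -/
noncomputable def TildeF (U : Set V) : TildeVert V → ℕ
  | Sum.inl i => if i = 2 then 2 else if i = 0 ∨ i = 3 then 1 else 0
  | Sum.inr (Sum.inl v) => U.indicator (fun _ => 2) v
  | Sum.inr (Sum.inr _) => 0

/-- `D` is a dominating set of `G`. -/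
def IsDomSet (G : SimpleGraph V) (D : Set V) : Prop :=
  ∀ v : V, ∃ u ∈ D, u = v ∨ G.Adj u v

/-- `D` is a minimal dominating set of `G`. -/
def IsMinDomSet (G : SimpleGraph V) (D : Set V) : Prop :=
  IsDomSet G D ∧ ∀ D' ⊆ D, IsDomSet G D' → D' = D


section Aux
variable {V : Type*} (G : SimpleGraph V)

lemma adj_t (y : TildeVert V) : (TildeGraph G).Adj (Sum.inl 3) y ↔ y = Sum.inl 2 := by
  rcases y with j | v | v <;> simp only [TildeGraph, TildeRel, Sum.inl.injEq] <;>
    [(revert j; decide); simp;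
     (simp only [show ((3:Fin 4) = 0) = False from by decide]; simp)]

lemma adj_s (y : TildeVert V) : (TildeGraph G).Adj (Sum.inl 2) y ↔ y = Sum.inl 1 ∨ y = Sum.inl 3 := by
  rcases y with j | v | v <;> simp only [TildeGraph, TildeRel, Sum.inl.injEq] <;>
    [(revert j; decide); simp;
     (simp only [show ((2:Fin 4) = 0) = False from by decide]; simp)]

lemma adj_r (y : TildeVert V) : (TildeGraph G).Adj (Sum.inl 1) y ↔ y = Sum.inl 0 ∨ y = Sum.inl 2 := by
  rcases y with j | v | v <;> simp only [TildeGraph, TildeRel, Sum.inl.injEq] <;>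
    [(revert j; decide); simp;
     (simp only [show ((1:Fin 4) = 0) = False from by decide]; simp)]

lemma adj_q (y : TildeVert V) : (TildeGraph G).Adj (Sum.inl 0) y ↔ y = Sum.inl 1 ∨ ∃ v, y = Sum.inr (Sum.inr v) := by
  rcases y with j | v | v <;> simp only [TildeGraph, TildeRel, Sum.inl.injEq] <;> simp

lemma adj_w (v : V) (y : TildeVert V) :
    (TildeGraph G).Adj (Sum.inr (Sum.inl v)) y ↔ ∃ u, y = Sum.inr (Sum.inr u) ∧ (u = v ∨ G.Adj v u) := by
  rcases y with j | u | u <;> simp [TildeGraph, TildeRel]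

lemma adj_x (v : V) (y : TildeVert V) :
    (TildeGraph G).Adj (Sum.inr (Sum.inr v)) y ↔ y = Sum.inl 0 ∨ ∃ z, y = Sum.inr (Sum.inl z) ∧ (v = z ∨ G.Adj z v) := by
  rcases y with j | u | u <;> simp [TildeGraph, TildeRel]

lemma mem_cns {A : Set (TildeVert V)} {z : TildeVert V} :
    z ∈ closedNbhdSet (TildeGraph G) A ↔ ∃ v ∈ A, z = v ∨ (TildeGraph G).Adj z v := by
  simp [closedNbhdSet, closedNbhd]

lemma mem_V0 {f : TildeVert V → ℕ} {z : TildeVert V} : z ∈ Vlevel f 0 ↔ f z = 0 := Iff.rfl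

/-- `t` witnesses maximality whenever `s` and `t` have nonzero value. -/
lemma maxAux (h : TildeVert V → ℕ) (ht : h (Sum.inl 3) ≠ 0) (hs : h (Sum.inl 2) ≠ 0) :
    closedNbhdSet (TildeGraph G) (Vlevel h 0) ≠ Set.univ := by
  intro hE
  have hm : (Sum.inl 3 : TildeVert V) ∈ closedNbhdSet (TildeGraph G) (Vlevel h 0) := by
    rw [hE]; trivial
  rw [mem_cns] at hm
  obtain ⟨v, hv0, hv⟩ := hm
  rcases hv with rfl | hadj
  · exact ht hv0
  · rw [adj_t] at hadj; subst hadj; exact hs hv0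

end Aux

open Classical in
/-- The canonical minimal mRdf associated to a dominating set `D`. -/
noncomputable def gFun (D : Set V) : TildeVert V → ℕ
  | Sum.inl i => if i = 2 then 2 else if i = 1 then 0 else 1
  | Sum.inr (Sum.inl v) => if v ∈ D then 2 else 1
  | Sum.inr (Sum.inr _) => 0

section GFun
variable {D : Set V}

@[simp] lemma gFun_q : gFun D (Sum.inl 0) = 1 := by simp [gFun]
@[simp] lemma gFun_r : gFun D (Sum.inl 1) = 0 := by simp [gFun]
@[simp] lemma gFun_s : gFun D (Sum.inl 2) = 2 := by simp [gFun]
@[simp] lemma gFun_t : gFun D (Sum.inl 3) = 1 := by simp [gFun]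
lemma gFun_w_mem {v : V} (hv : v ∈ D) : gFun D (Sum.inr (Sum.inl v)) = 2 := by simp [gFun, hv]
lemma gFun_w_not_mem {v : V} (hv : v ∉ D) : gFun D (Sum.inr (Sum.inl v)) = 1 := by simp [gFun, hv]
@[simp] lemma gFun_x {v : V} : gFun D (Sum.inr (Sum.inr v)) = 0 := rfl

lemma gFun_mRdf (G : SimpleGraph V) (hD : IsDomSet G D) : IsMRDF (TildeGraph G) (gFun D) := by
  refine ⟨⟨?_, ?_⟩, maxAux G _ (by simp) (by simp)⟩
  · rintro (j | v | v)
    · fin_cases j <;> simp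
    · by_cases hv : v ∈ D
      · simp [gFun_w_mem hv]
      · simp [gFun_w_not_mem hv]
    · simp
  · rintro (j | v | v) ha
    · fin_cases j <;> simp at ha
      exact ⟨Sum.inl 2, (adj_r G _).mpr (Or.inr rfl), by simp⟩
    · by_cases hv : v ∈ D
      · rw [gFun_w_mem hv] at ha; exact absurd ha (by norm_num)
      · rw [gFun_w_not_mem hv] at ha; exact absurd ha (by norm_num)
    · obtain ⟨z, hzD, hz⟩ := hD v
      refine ⟨Sum.inr (Sum.inl z), (adj_x G _ _).mpr (Or.inr ⟨z, rfl, ?_⟩), gFun_w_mem hzD⟩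
      rcases hz with rfl | h
      · exact Or.inl rfl
      · exact Or.inr h

end GFun

lemma forward (G : SimpleGraph V) (U D : Set V) (hD : IsMinDomSet G D) (hUD : U ⊆ D) :
    ∃ g : TildeVert V → ℕ, MinimalWrt (IsMRDF (TildeGraph G)) g ∧ TildeF U ≤ g := by
  refine ⟨gFun D, ⟨gFun_mRdf G hD.1, ?_⟩, ?_⟩
  · -- minimality
    intro h hm hle
    obtain ⟨⟨hle2, hRdf⟩, hmax⟩ := hm
    have h_r : h (Sum.inl 1) = 0 := Nat.le_zero.mp (by simpa using hle (Sum.inl 1))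
    have h_x : ∀ v, h (Sum.inr (Sum.inr v)) = 0 := fun v =>
      Nat.le_zero.mp (by simpa using hle (Sum.inr (Sum.inr v)))
    -- the maximality witness must be t
    obtain ⟨z, hz⟩ := (Set.ne_univ_iff_exists_notMem _).mp hmax
    have hzt : z = Sum.inl 3 := by
      rcases z with j | v | v
      · fin_cases j
        · exact absurd ((mem_cns G).mpr ⟨Sum.inl 1, h_r, Or.inr ((adj_q G _).mpr (Or.inl rfl))⟩) hz
        · exact absurd ((mem_cns G).mpr ⟨Sum.inl 1, h_r, Or.inl rfl⟩) hz
        · exact absurd ((mem_cns G).mpr ⟨Sum.inl 1, h_r, Or.inr ((adj_s G _).mpr (Or.inl rfl))⟩) hz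
        · rfl
      · exact absurd ((mem_cns G).mpr ⟨Sum.inr (Sum.inr v), h_x v,
          Or.inr ((adj_w G _ _).mpr ⟨v, rfl, Or.inl rfl⟩)⟩) hz
      · exact absurd ((mem_cns G).mpr ⟨Sum.inr (Sum.inr v), h_x v, Or.inl rfl⟩) hz
    subst hzt
    have h_t : h (Sum.inl 3) = 1 := by
      have h1 : h (Sum.inl 3) ≤ 1 := by simpa using hle (Sum.inl 3)
      have h2 : h (Sum.inl 3) ≠ 0 := fun h0 => hz ((mem_cns G).mpr ⟨_, h0, Or.inl rfl⟩)
      omega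
    have h_s : h (Sum.inl 2) = 2 := by
      obtain ⟨u, hadj, hu2⟩ := hRdf (Sum.inl 1) h_r
      rcases (adj_r G _).mp hadj with rfl | rfl
      · have := hle (Sum.inl 0); simp at this; omega
      · exact hu2
    have h_q : h (Sum.inl 0) = 1 := by
      have h1 : h (Sum.inl 0) ≤ 1 := by simpa using hle (Sum.inl 0)
      have h2 : h (Sum.inl 0) ≠ 0 := by
        intro h0
        obtain ⟨u, hadj, hu2⟩ := hRdf (Sum.inl 0) h0
        rcases (adj_q G _).mp hadj with rfl | ⟨v, rfl⟩
        · rw [h_r] at hu2; exact absurd hu2 (by norm_num)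
        · rw [h_x v] at hu2; exact absurd hu2 (by norm_num)
      omega
    have hsub : {v | h (Sum.inr (Sum.inl v)) = 2} ⊆ D := by
      intro v hv
      by_contra hvD
      have := hle (Sum.inr (Sum.inl v))
      rw [gFun_w_not_mem hvD] at this
      rw [Set.mem_setOf_eq] at hv
      rw [hv] at this
      exact absurd this (by norm_num)
    have hdom : IsDomSet G {v | h (Sum.inr (Sum.inl v)) = 2} := by
      intro v
      obtain ⟨u, hadj, hu2⟩ := hRdf (Sum.inr (Sum.inr v)) (h_x v)
      rcases (adj_x G _ _).mp hadj with rfl | ⟨z, rfl, hz'⟩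
      · rw [h_q] at hu2; exact absurd hu2 (by norm_num)
      · refine ⟨z, hu2, ?_⟩
        rcases hz' with rfl | h'
        · exact Or.inl rfl
        · exact Or.inr h'
    have hDeq : {v | h (Sum.inr (Sum.inl v)) = 2} = D := hD.2 _ hsub hdom
    have h_w : ∀ v, h (Sum.inr (Sum.inl v)) = gFun D (Sum.inr (Sum.inl v)) := by
      intro v
      by_cases hv : v ∈ D
      · rw [gFun_w_mem hv, ← hDeq] at *
        exact hv
      · rw [gFun_w_not_mem hv]
        have h1 : h (Sum.inr (Sum.inl v)) ≤ 1 := by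
          have := hle (Sum.inr (Sum.inl v)); rwa [gFun_w_not_mem hv] at this
        have h2 : h (Sum.inr (Sum.inl v)) ≠ 0 := by
          intro h0
          obtain ⟨u, hadj, hu2⟩ := hRdf _ h0
          obtain ⟨z, rfl, -⟩ := (adj_w G _ _).mp hadj
          rw [h_x z] at hu2; exact absurd hu2 (by norm_num)
        omega
    funext a
    rcases a with j | v | v
    · fin_cases j <;> simp [h_q, h_r, h_s, h_t]
    · exact h_w v
    · simp [h_x v]
  · -- TildeF U ≤ gFun D
    rintro (j | v | v)
    · fin_cases j <;> simp [TildeF]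
    · by_cases hv : v ∈ U
      · simp [TildeF, Set.indicator_of_mem hv, gFun_w_mem (hUD hv)]
      · simp [TildeF, Set.indicator_of_notMem hv]
    · simp [TildeF]

lemma backward (G : SimpleGraph V) (U : Set V) (g : TildeVert V → ℕ)
    (hmin : MinimalWrt (IsMRDF (TildeGraph G)) g) (hfg : TildeF U ≤ g) :
    ∃ D : Set V, IsMinDomSet G D ∧ U ⊆ D := by
  classical
  obtain ⟨⟨⟨gle2, gRdf⟩, gmax⟩, gMin⟩ := hmin
  have hfs : (2 : ℕ) ≤ g (Sum.inl 2) := by simpa [TildeF] using hfg (Sum.inl 2)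
  have g_s : g (Sum.inl 2) = 2 := le_antisymm (gle2 _) hfs
  have g_q1 : (1 : ℕ) ≤ g (Sum.inl 0) := by simpa [TildeF] using hfg (Sum.inl 0)
  have g_t1 : (1 : ℕ) ≤ g (Sum.inl 3) := by simpa [TildeF] using hfg (Sum.inl 3)
  have g_wU : ∀ v ∈ U, g (Sum.inr (Sum.inl v)) = 2 := by
    intro v hv
    have := hfg (Sum.inr (Sum.inl v))
    rw [show TildeF U (Sum.inr (Sum.inl v)) = 2 by simp [TildeF, Set.indicator_of_mem hv]] at this
    exact le_antisymm (gle2 _) this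
  -- step 3 : g q = 1
  have g_q : g (Sum.inl 0) = 1 := by
    by_contra hne
    have hq2 : g (Sum.inl 0) = 2 := by have := gle2 (Sum.inl 0); omega
    set g1 := Function.update g (Sum.inl 2) 1 with hg1
    have h1 : IsMRDF (TildeGraph G) g1 := by
      refine ⟨⟨?_, ?_⟩, maxAux G _ ?_ ?_⟩
      · intro a
        by_cases ha : a = Sum.inl 2
        · subst ha; simp [hg1]
        · rw [hg1, Function.update_of_ne ha]; exact gle2 a
      · intro a ha0
        by_cases ha : a = Sum.inl 2
        · subst ha; simp [hg1] at ha0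
        · rw [hg1, Function.update_of_ne ha] at ha0
          obtain ⟨u, hadj, hu2⟩ := gRdf a ha0
          by_cases hu : u = Sum.inl 2
          · subst hu
            -- a is a neighbor of s, so a = r or a = t
            have := (adj_s G a).mp ((TildeGraph G).adj_symm hadj)
            rcases this with rfl | rfl
            · exact ⟨Sum.inl 0, (adj_r G _).mpr (Or.inl rfl),
                by rw [hg1, Function.update_of_ne (by simp)]; exact hq2⟩
            · omega
          · exact ⟨u, hadj, by rw [hg1, Function.update_of_ne hu]; exact hu2⟩
      · rw [hg1, Function.update_of_ne (by simp)]; omega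
      · simp [hg1]
    have he := gMin g1 h1 (by
      intro a
      by_cases ha : a = Sum.inl 2
      · subst ha; simp [hg1, g_s]
      · rw [hg1, Function.update_of_ne ha])
    have := congrFun he (Sum.inl 2)
    simp [hg1, g_s] at this
  -- step 4 : g r = 0
  have g_r : g (Sum.inl 1) = 0 := by
    by_contra hne
    set g1 := Function.update g (Sum.inl 1) 0 with hg1
    have h1 : IsMRDF (TildeGraph G) g1 := by
      refine ⟨⟨?_, ?_⟩, maxAux G _ ?_ ?_⟩
      · intro a
        by_cases ha : a = Sum.inl 1
        · subst ha; simp [hg1]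
        · rw [hg1, Function.update_of_ne ha]; exact gle2 a
      · intro a ha0
        by_cases ha : a = Sum.inl 1
        · subst ha
          exact ⟨Sum.inl 2, (adj_r G _).mpr (Or.inr rfl),
            by rw [hg1, Function.update_of_ne (by simp)]; exact g_s⟩
        · rw [hg1, Function.update_of_ne ha] at ha0
          obtain ⟨u, hadj, hu2⟩ := gRdf a ha0
          by_cases hu : u = Sum.inl 1
          · subst hu
            have := (adj_r G a).mp ((TildeGraph G).adj_symm hadj)
            rcases this with rfl | rfl
            · omega
            · rw [g_s] at ha0; omega
          · exact ⟨u, hadj, by rw [hg1, Function.update_of_ne hu]; exact hu2⟩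
      · rw [hg1, Function.update_of_ne (by simp)]; omega
      · rw [hg1, Function.update_of_ne (by simp)]; omega
    have he := gMin g1 h1 (by
      intro a
      by_cases ha : a = Sum.inl 1
      · subst ha; simp [hg1]
      · rw [hg1, Function.update_of_ne ha])
    have := congrFun he (Sum.inl 1)
    rw [hg1, Function.update_self] at this
    exact hne this.symm
  -- step 5 : g t = 1
  have g_t : g (Sum.inl 3) = 1 := by
    by_contra hne
    have ht2 : g (Sum.inl 3) = 2 := by have := gle2 (Sum.inl 3); omega
    set g1 := Function.update g (Sum.inl 3) 1 with hg1
    have h1 : IsMRDF (TildeGraph G) g1 := by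
      refine ⟨⟨?_, ?_⟩, maxAux G _ ?_ ?_⟩
      · intro a
        by_cases ha : a = Sum.inl 3
        · subst ha; simp [hg1]
        · rw [hg1, Function.update_of_ne ha]; exact gle2 a
      · intro a ha0
        by_cases ha : a = Sum.inl 3
        · subst ha; simp [hg1] at ha0
        · rw [hg1, Function.update_of_ne ha] at ha0
          obtain ⟨u, hadj, hu2⟩ := gRdf a ha0
          by_cases hu : u = Sum.inl 3
          · subst hu
            have := (adj_t G a).mp ((TildeGraph G).adj_symm hadj)
            subst this; rw [g_s] at ha0; omega
          · exact ⟨u, hadj, by rw [hg1, Function.update_of_ne hu]; exact hu2⟩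
      · simp [hg1]
      · rw [hg1, Function.update_of_ne (by simp)]; omega
    have he := gMin g1 h1 (by
      intro a
      by_cases ha : a = Sum.inl 3
      · subst ha; simp [hg1]; omega
      · rw [hg1, Function.update_of_ne ha])
    have := congrFun he (Sum.inl 3)
    rw [hg1, Function.update_self] at this
    omega
  -- step 6 : g x_v ≤ 1
  have g_xle : ∀ v, g (Sum.inr (Sum.inr v)) ≤ 1 := by
    intro v0
    by_contra hne
    have hx2 : g (Sum.inr (Sum.inr v0)) = 2 := by have := gle2 (Sum.inr (Sum.inr v0)); omega
    set g1 := Function.update g (Sum.inl 0) 0 with hg1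
    have h1 : IsMRDF (TildeGraph G) g1 := by
      refine ⟨⟨?_, ?_⟩, maxAux G _ ?_ ?_⟩
      · intro a
        by_cases ha : a = Sum.inl 0
        · subst ha; simp [hg1]
        · rw [hg1, Function.update_of_ne ha]; exact gle2 a
      · intro a ha0
        by_cases ha : a = Sum.inl 0
        · subst ha
          exact ⟨Sum.inr (Sum.inr v0), (adj_q G _).mpr (Or.inr ⟨v0, rfl⟩),
            by rw [hg1, Function.update_of_ne (by simp)]; exact hx2⟩
        · rw [hg1, Function.update_of_ne ha] at ha0
          obtain ⟨u, hadj, hu2⟩ := gRdf a ha0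
          by_cases hu : u = Sum.inl 0
          · subst hu; rw [g_q] at hu2; omega
          · exact ⟨u, hadj, by rw [hg1, Function.update_of_ne hu]; exact hu2⟩
      · rw [hg1, Function.update_of_ne (by simp)]; omega
      · rw [hg1, Function.update_of_ne (by simp)]; omega
    have he := gMin g1 h1 (by
      intro a
      by_cases ha : a = Sum.inl 0
      · subst ha; simp [hg1]
      · rw [hg1, Function.update_of_ne ha])
    have := congrFun he (Sum.inl 0)
    rw [hg1, Function.update_self, g_q] at this
    exact absurd this (by norm_num)
  -- step 7 : g w_v ≥ 1
  have g_w1 : ∀ v, 1 ≤ g (Sum.inr (Sum.inl v)) := by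
    intro v
    by_contra hne
    have h0 : g (Sum.inr (Sum.inl v)) = 0 := by omega
    obtain ⟨u, hadj, hu2⟩ := gRdf _ h0
    obtain ⟨z, rfl, -⟩ := (adj_w G _ _).mp hadj
    have := g_xle z; omega
  -- step 8 : g x_v = 0
  have g_x : ∀ v, g (Sum.inr (Sum.inr v)) = 0 := by
    intro v
    set g1 := Function.update g (Sum.inl 3) 0 with hg1
    have hRdf1 : IsRDF (TildeGraph G) g1 := by
      constructor
      · intro a
        by_cases ha : a = Sum.inl 3
        · subst ha; simp [hg1]
        · rw [hg1, Function.update_of_ne ha]; exact gle2 a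
      · intro a ha0
        by_cases ha : a = Sum.inl 3
        · subst ha
          exact ⟨Sum.inl 2, (adj_t G _).mpr rfl,
            by rw [hg1, Function.update_of_ne (by simp)]; exact g_s⟩
        · rw [hg1, Function.update_of_ne ha] at ha0
          obtain ⟨u, hadj, hu2⟩ := gRdf a ha0
          by_cases hu : u = Sum.inl 3
          · subst hu; rw [g_t] at hu2; omega
          · exact ⟨u, hadj, by rw [hg1, Function.update_of_ne hu]; exact hu2⟩
    have hne : g1 ≠ g := by
      intro he
      have := congrFun he (Sum.inl 3)
      rw [hg1, Function.update_self, g_t] at this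
      exact absurd this (by norm_num)
    have hnm : ¬ IsMRDF (TildeGraph G) g1 := by
      intro hm
      exact hne (gMin g1 hm (by
        intro a
        by_cases ha : a = Sum.inl 3
        · subst ha; simp [hg1]
        · rw [hg1, Function.update_of_ne ha]))
    have huniv : closedNbhdSet (TildeGraph G) (Vlevel g1 0) = Set.univ := by
      by_contra hu
      exact hnm ⟨hRdf1, hu⟩
    have hmem : (Sum.inr (Sum.inr v) : TildeVert V) ∈
        closedNbhdSet (TildeGraph G) (Vlevel g1 0) := by rw [huniv]; trivial
    rw [mem_cns G] at hmem
    obtain ⟨z, hz0, hz⟩ := hmem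
    rcases hz with rfl | hadj
    · rw [mem_V0, hg1, Function.update_of_ne (by simp)] at hz0
      exact hz0
    · rcases (adj_x G _ _).mp hadj with rfl | ⟨u, rfl, -⟩
      · rw [mem_V0, hg1, Function.update_of_ne (by simp), g_q] at hz0
        exact absurd hz0 (by norm_num)
      · rw [mem_V0, hg1, Function.update_of_ne (by simp)] at hz0
        have := g_w1 u; omega
  -- the dominating set
  refine ⟨{v | g (Sum.inr (Sum.inl v)) = 2}, ⟨?_, ?_⟩, fun v hv => g_wU v hv⟩
  · -- dominating
    intro v
    obtain ⟨u, hadj, hu2⟩ := gRdf (Sum.inr (Sum.inr v)) (g_x v)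
    rcases (adj_x G _ _).mp hadj with rfl | ⟨z, rfl, hz'⟩
    · rw [g_q] at hu2; exact absurd hu2 (by norm_num)
    · refine ⟨z, hu2, ?_⟩
      rcases hz' with rfl | h'
      · exact Or.inl rfl
      · exact Or.inr h'
  · -- minimal
    intro D' hsub hdom
    set g1 : TildeVert V → ℕ := fun a => match a with
      | Sum.inr (Sum.inl v) => if v ∈ D' then 2 else 1
      | a => g a with hg1
    have h1 : IsMRDF (TildeGraph G) g1 := by
      refine ⟨⟨?_, ?_⟩, maxAux G _ (by rw [hg1]; simp; omega) (by rw [hg1]; simp [g_s])⟩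
      · rintro (j | v | v)
        · exact gle2 _
        · by_cases hv : v ∈ D' <;> simp [hg1, hv]
        · exact gle2 _
      · rintro (j | v | v) ha0
        · fin_cases j
          · exact absurd (show g (Sum.inl 0) = 0 from ha0) (by rw [g_q]; norm_num)
          · exact ⟨Sum.inl 2, (adj_r G _).mpr (Or.inr rfl), show g1 (Sum.inl 2) = 2 from g_s⟩
          · exact absurd (show g (Sum.inl 2) = 0 from ha0) (by rw [g_s]; norm_num)
          · exact absurd (show g (Sum.inl 3) = 0 from ha0) (by rw [g_t]; norm_num)
        · by_cases hv : v ∈ D' <;> simp [hg1, hv] at ha0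
        · rw [hg1] at ha0; simp only at ha0
          obtain ⟨z, hzD, hz⟩ := hdom v
          refine ⟨Sum.inr (Sum.inl z), (adj_x G _ _).mpr (Or.inr ⟨z, rfl, ?_⟩), ?_⟩
          · rcases hz with rfl | h'
            · exact Or.inl rfl
            · exact Or.inr h'
          · simp [hg1, hzD]
    have hle1 : g1 ≤ g := by
      rintro (j | v | v)
      · exact le_refl _
      · by_cases hv : v ∈ D'
        · simp only [hg1, hv, if_true]
          exact le_of_eq (hsub hv).symm
        · simp only [hg1, hv, if_false]
          exact g_w1 v
      · exact le_refl _
    have he := gMin g1 h1 hle1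
    ext v
    constructor
    · intro hv; exact hsub hv
    · intro hv
      rw [Set.mem_setOf_eq] at hv
      by_contra hvD'
      have := congrFun he (Sum.inr (Sum.inl v))
      simp only [hg1, hvD', if_false] at this
      rw [hv] at this
      exact absurd this (by norm_num)

/-- there is a minimal dominating set `D ⊇ U` of `G` iff there is a
minimal maximal Roman dominating function `g` on `G̃` with `f ≤ g`. -/
theorem stmt18 [Fintype V] (G : SimpleGraph V) (U : Set V) :
    (∃ D : Set V, IsMinDomSet G D ∧ U ⊆ D) ↔
    (∃ g : TildeVert V → ℕ, MinimalWrt (IsMRDF (TildeGraph G)) g ∧ TildeF U ≤ g) := by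
  constructor
  · rintro ⟨D, hD, hUD⟩
    exact forward G U D hD hUD
  · rintro ⟨g, hmin, hfg⟩
    exact backward G U g hmin hfg
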